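/- arXiv:2211.10613 — 5 statements merged into one kernel-verified Lean document; each statement's English description precedes it below -/
import Mathlib

section
/- Let ζ : ℝ → ℝ be defined by ζ(x) = x² if x ≤ 0 and ζ(x) = 0 otherwise, extended to Hermitian matrices via the functional calculus. Then for any m×m Hermitian matrix H, Tr ζ(H) = min { ‖H − X‖₂² : X positive semidefinite }, where ‖·‖₂ is the Frobenius (Schatten 2) norm. -/
open Matrix ComplexOrder

/-- `ζ(x) = x²` for `x ≤ 0` and `0` otherwise. -/
noncomputable def zetaFn (x : ℝ) : ℝ := if x ≤ 0 then x ^ 2 else 0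

/-- `Tr ζ(H)` for a Hermitian matrix `H`, computed via the functional calculus:
`Tr ζ(H) = ∑ i, ζ(λ_i)` where `λ_i` are the eigenvalues of `H`. -/
noncomputable def traceZeta {m : ℕ} {H : Matrix (Fin m) (Fin m) ℂ}
    (hH : H.IsHermitian) : ℝ :=
  ∑ i, zetaFn (hH.eigenvalues i)

/-- Squared Frobenius (Schatten 2) norm `‖A‖₂² = Tr(A†A)`. -/
noncomputable def frobSq {m : ℕ} (A : Matrix (Fin m) (Fin m) ℂ) : ℝ :=
  (Matrix.trace (Aᴴ * A)).re

lemma frobSq_eq_sum {m : ℕ} (A : Matrix (Fin m) (Fin m) ℂ) :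
    frobSq A = ∑ j, ∑ i, Complex.normSq (A i j) := by
  simp only [frobSq, Matrix.trace, Matrix.diag, Matrix.mul_apply, Matrix.conjTranspose_apply]
  rw [Complex.re_sum]
  refine Finset.sum_congr rfl fun j _ => ?_
  rw [Complex.re_sum]
  refine Finset.sum_congr rfl fun i _ => ?_
  simp [Complex.normSq_apply, Complex.mul_re]

lemma frobSq_conj {m : ℕ} (U A : Matrix (Fin m) (Fin m) ℂ)
    (hU : U ∈ Matrix.unitaryGroup (Fin m) ℂ) :
    frobSq (star U * A * U) = frobSq A := by
  have h1 : star U * U = 1 := hU.1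
  have h2 : U * star U = 1 := hU.2
  simp only [frobSq]
  congr 1
  have : (star U * A * U)ᴴ * (star U * A * U) = star U * (Aᴴ * A) * U := by
    simp only [Matrix.conjTranspose_mul, Matrix.star_eq_conjTranspose,
      Matrix.conjTranspose_conjTranspose, Matrix.mul_assoc]
    have h3 : U * (Uᴴ * (A * U)) = A * U := by
      rw [← Matrix.mul_assoc, show U * Uᴴ = 1 from h2, Matrix.one_mul]
    rw [h3]
  rw [this, Matrix.trace_mul_cycle, ← Matrix.mul_assoc,
    show U * star U = 1 from h2, Matrix.one_mul]

lemma frobSq_conj' {m : ℕ} (U A : Matrix (Fin m) (Fin m) ℂ)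
    (hU : U ∈ Matrix.unitaryGroup (Fin m) ℂ) :
    frobSq (U * A * star U) = frobSq A := by
  have := frobSq_conj (star U) A (Unitary.star_mem hU)
  rwa [star_star] at this

/-- For any Hermitian matrix `H`,
`Tr ζ(H) = min { ‖H − X‖₂² : X positive semidefinite }`. -/
theorem traceZeta_eq_min_dist_psd {m : ℕ} {H : Matrix (Fin m) (Fin m) ℂ}
    (hH : H.IsHermitian) :
    IsLeast {c : ℝ | ∃ X : Matrix (Fin m) (Fin m) ℂ, X.PosSemidef ∧ c = frobSq (H - X)}
      (traceZeta hH) := by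
  set U : Matrix (Fin m) (Fin m) ℂ := (hH.eigenvectorUnitary : Matrix (Fin m) (Fin m) ℂ)
  have hUmem : U ∈ Matrix.unitaryGroup (Fin m) ℂ := hH.eigenvectorUnitary.2
  set lam : Fin m → ℝ := hH.eigenvalues
  have hdiag : star U * H * U = Matrix.diagonal (Complex.ofReal ∘ lam) :=
    by have := hH.conjStarAlgAut_star_eigenvectorUnitary; rwa [Unitary.conjStarAlgAut_star_apply] at this
  constructor
  · -- membership: X = positive part of H
    refine ⟨U * Matrix.diagonal (fun i => (↑(max (lam i) 0) : ℂ)) * star U, ?_, ?_⟩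
    · have hd : (Matrix.diagonal (fun i => (↑(max (lam i) 0) : ℂ))).PosSemidef := by
        rw [Matrix.posSemidef_diagonal_iff]
        intro i
        rw [Complex.nonneg_iff]
        simp
      simpa [Matrix.star_eq_conjTranspose] using hd.mul_mul_conjTranspose_same U
    · have hH' : H = U * Matrix.diagonal (Complex.ofReal ∘ lam) * star U :=
        hH.spectral_theorem
      have hdsub : Matrix.diagonal (Complex.ofReal ∘ lam)
            - Matrix.diagonal (fun i => (↑(max (lam i) 0) : ℂ))
          = Matrix.diagonal (fun i => (↑(min (lam i) 0) : ℂ)) := by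
        rw [Matrix.diagonal_sub]
        refine congrArg Matrix.diagonal (funext fun i => ?_)
        simp only [Pi.sub_apply, Function.comp_apply]
        rw [← Complex.ofReal_sub, Complex.ofReal_inj]
        rcases le_or_gt (lam i) 0 with h | h
        · rw [max_eq_right h, min_eq_left h]; ring
        · rw [max_eq_left h.le, min_eq_right h.le]; ring
      have : H - U * Matrix.diagonal (fun i => (↑(max (lam i) 0) : ℂ)) * star U
          = U * Matrix.diagonal (fun i => (↑(min (lam i) 0) : ℂ)) * star U := by
        rw [hH', ← Matrix.sub_mul, ← Matrix.mul_sub, hdsub]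
      rw [this, frobSq_conj' U _ hUmem, frobSq_eq_sum]
      simp only [traceZeta, Matrix.diagonal_apply]
      rw [Finset.sum_comm]
      refine Finset.sum_congr rfl fun i _ => ?_
      rw [Finset.sum_eq_single i (fun j _ hj => by rw [if_neg (Ne.symm hj)]; simp)
        (by simp)]
      rw [if_pos rfl, Complex.normSq_ofReal]
      simp only [zetaFn]
      rcases le_or_gt (lam i) 0 with h | h
      · rw [if_pos h, min_eq_left h, sq]
      · rw [if_neg (not_le.mpr h), min_eq_right h.le, mul_zero]
  · -- lower bound
    rintro c ⟨X, hX, rfl⟩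
    set Y : Matrix (Fin m) (Fin m) ℂ := star U * X * U
    have hY : Y.PosSemidef := by
      simpa [Y, Matrix.star_eq_conjTranspose] using hX.conjTranspose_mul_mul_same U
    have hYd : ∀ i, 0 ≤ (Y i i).re ∧ (Y i i).im = 0 := by
      intro i
      have h0 : (0 : ℂ) ≤ Y i i := by
        have := hY.dotProduct_mulVec_nonneg (Pi.single i 1)
        simpa [dotProduct, Matrix.mulVec, Pi.single_apply] using this
      rw [Complex.nonneg_iff] at h0
      exact ⟨h0.1, h0.2.symm⟩
    have key : frobSq (H - X) = frobSq (Matrix.diagonal (Complex.ofReal ∘ lam) - Y) := by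
      rw [← frobSq_conj U (H - X) hUmem]
      congr 1
      rw [Matrix.mul_sub, Matrix.sub_mul, hdiag]
    rw [key, frobSq_eq_sum, traceZeta]
    calc ∑ i, zetaFn (lam i)
        ≤ ∑ i, Complex.normSq ((Matrix.diagonal (Complex.ofReal ∘ lam) - Y) i i) := by
          refine Finset.sum_le_sum fun i _ => ?_
          have him : ((Matrix.diagonal (Complex.ofReal ∘ lam) - Y) i i).im = 0 - (Y i i).im := by
            simp [Matrix.sub_apply, Matrix.diagonal_apply_eq]
          have hre : ((Matrix.diagonal (Complex.ofReal ∘ lam) - Y) i i).re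
              = lam i - (Y i i).re := by
            simp [Matrix.sub_apply, Matrix.diagonal_apply_eq]
          rw [Complex.normSq_apply, hre, him, (hYd i).2]
          have ha := (hYd i).1
          simp only [zetaFn]
          rcases le_or_gt (lam i) 0 with h | h
          · rw [if_pos h]; nlinarith [(hYd i).1]
          · rw [if_neg (not_le.mpr h)]; nlinarith [sq_nonneg (lam i - (Y i i).re)]
      _ ≤ ∑ j, ∑ i, Complex.normSq ((Matrix.diagonal (Complex.ofReal ∘ lam) - Y) i j) := by
          refine Finset.sum_le_sum fun j _ => ?_
          exact Finset.single_le_sum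
            (f := fun i => Complex.normSq ((Matrix.diagonal (Complex.ofReal ∘ lam) - Y) i j))
            (fun i _ => Complex.normSq_nonneg _) (Finset.mem_univ j)
end

section
/- For any Hermitian matrices P and Q of the same dimension, |Tr ζ(P+Q) − Tr ζ(P)| ≤ 2(‖P‖₂‖Q‖₂ + ‖Q‖₂²), where ζ(x) = x² for x ≤ 0 and ζ(x) = 0 otherwise is applied via functional calculus and ‖·‖₂ is the Frobenius norm. -/
open Matrix

/-- Frobenius (Schatten 2) norm `‖A‖₂ = (Tr(A†A))^(1/2)`. -/
noncomputable def frobNorm {m : ℕ} (A : Matrix (Fin m) (Fin m) ℂ) : ℝ :=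
  Real.sqrt (Matrix.trace (Aᴴ * A)).re

namespace ZetaProofAux
variable {m : ℕ}

lemma row_sum (W : Matrix (Fin m) (Fin m) ℂ) (hW : W * Wᴴ = 1) (i : Fin m) :
    ∑ j, ‖W i j‖ ^ 2 = 1 := by
  have h := congrArg (fun M : Matrix (Fin m) (Fin m) ℂ => (M i i).re) hW
  simp only [Matrix.mul_apply, conjTranspose_apply, Matrix.one_apply_eq] at h
  rw [Complex.re_sum, Complex.one_re] at h
  rw [← h]
  refine Finset.sum_congr rfl fun j _ => ?_
  rw [RCLike.star_def, Complex.mul_conj]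
  simp [Complex.normSq_eq_norm_sq, ← Complex.ofReal_pow]

lemma col_sum (W : Matrix (Fin m) (Fin m) ℂ) (hW : Wᴴ * W = 1) (j : Fin m) :
    ∑ i, ‖W i j‖ ^ 2 = 1 := by
  have := row_sum Wᴴ (by simpa using hW) j
  simpa using this

lemma spec {A : Matrix (Fin m) (Fin m) ℂ} (hA : A.IsHermitian) :
    A = (hA.eigenvectorUnitary : Matrix (Fin m) (Fin m) ℂ)
        * diagonal (Complex.ofReal ∘ hA.eigenvalues)
        * (hA.eigenvectorUnitary : Matrix (Fin m) (Fin m) ℂ)ᴴ := by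
  have := hA.spectral_theorem
  rw [Unitary.conjStarAlgAut_apply, Matrix.star_eq_conjTranspose] at this
  exact this

lemma unit1 {A : Matrix (Fin m) (Fin m) ℂ} (hA : A.IsHermitian) :
    (hA.eigenvectorUnitary : Matrix (Fin m) (Fin m) ℂ)ᴴ * (hA.eigenvectorUnitary : Matrix (Fin m) (Fin m) ℂ) = 1 ∧
    (hA.eigenvectorUnitary : Matrix (Fin m) (Fin m) ℂ) * (hA.eigenvectorUnitary : Matrix (Fin m) (Fin m) ℂ)ᴴ = 1 := by
  refine ⟨?_, ?_⟩
  · rw [← Matrix.star_eq_conjTranspose]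
    exact Unitary.coe_star_mul_self hA.eigenvectorUnitary
  · rw [← Matrix.star_eq_conjTranspose]
    exact Unitary.coe_mul_star_self hA.eigenvectorUnitary

lemma trace_diag_diag (α β : Fin m → ℝ) (W : Matrix (Fin m) (Fin m) ℂ) :
    (Matrix.trace (diagonal (Complex.ofReal ∘ α) * W * diagonal (Complex.ofReal ∘ β) * Wᴴ)).re
      = ∑ i, ∑ j, ‖W i j‖ ^ 2 * (α i * β j) := by
  have key : ∀ i j : Fin m,
      ((diagonal (Complex.ofReal ∘ α) * W * diagonal (Complex.ofReal ∘ β)) i j * Wᴴ j i).re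
        = ‖W i j‖ ^ 2 * (α i * β j) := by
    intro i j
    rw [Matrix.mul_diagonal, Matrix.diagonal_mul, conjTranspose_apply]
    have : (Complex.ofReal ∘ α) i * W i j * (Complex.ofReal ∘ β) j * star (W i j)
        = (W i j * star (W i j)) * ((α i : ℂ) * (β j : ℂ)) := by
      simp only [Function.comp_apply]; ring
    rw [this, RCLike.star_def, Complex.mul_conj]
    rw [← Complex.ofReal_mul, ← Complex.ofReal_mul, Complex.ofReal_re]
    simp [Complex.normSq_eq_norm_sq]
  simp only [Matrix.trace, Matrix.diag,
    Matrix.mul_apply (M := diagonal (Complex.ofReal ∘ α) * W * diagonal (Complex.ofReal ∘ β))]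
  rw [Complex.re_sum]
  refine Finset.sum_congr rfl fun i _ => ?_
  rw [Complex.re_sum]
  exact Finset.sum_congr rfl fun j _ => key i j

lemma trace_mul_re {A B : Matrix (Fin m) (Fin m) ℂ} (hA : A.IsHermitian) (hB : B.IsHermitian) :
    (Matrix.trace (A * B)).re = ∑ i, ∑ j,
      ‖((hA.eigenvectorUnitary : Matrix (Fin m) (Fin m) ℂ)ᴴ
          * (hB.eigenvectorUnitary : Matrix (Fin m) (Fin m) ℂ)) i j‖ ^ 2
        * (hA.eigenvalues i * hB.eigenvalues j) := by
  set U := (hA.eigenvectorUnitary : Matrix (Fin m) (Fin m) ℂ)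
  set V := (hB.eigenvectorUnitary : Matrix (Fin m) (Fin m) ℂ)
  set Dα := diagonal (Complex.ofReal ∘ hA.eigenvalues)
  set Dβ := diagonal (Complex.ofReal ∘ hB.eigenvalues)
  have h1 : A * B = U * (Dα * (Uᴴ * V) * Dβ * Vᴴ) := by
    conv_lhs => rw [spec hA, spec hB]
    simp only [Matrix.mul_assoc]
    rfl
  rw [h1, trace_mul_comm]
  have h2 : Dα * (Uᴴ * V) * Dβ * Vᴴ * U = Dα * (Uᴴ * V) * Dβ * (Uᴴ * V)ᴴ := by
    simp only [conjTranspose_mul, conjTranspose_conjTranspose, Matrix.mul_assoc]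
  rw [h2, trace_diag_diag]

lemma trace_sq_re {A : Matrix (Fin m) (Fin m) ℂ} (hA : A.IsHermitian) :
    (Matrix.trace (A * A)).re = ∑ i, hA.eigenvalues i ^ 2 := by
  rw [trace_mul_re hA hA]
  rw [show (hA.eigenvectorUnitary : Matrix (Fin m) (Fin m) ℂ)ᴴ
      * (hA.eigenvectorUnitary : Matrix (Fin m) (Fin m) ℂ) = 1 from (unit1 hA).1]
  refine Finset.sum_congr rfl fun i _ => ?_
  rw [Finset.sum_eq_single i]
  · simp [Matrix.one_apply_eq, sq]
  · intro j _ hj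
    simp [Matrix.one_apply, (Ne.symm hj)]
  · simp

lemma frob_sq_trace {A : Matrix (Fin m) (Fin m) ℂ} (hA : A.IsHermitian) :
    frobNorm A ^ 2 = (Matrix.trace (A * A)).re := by
  rw [frobNorm, show Aᴴ = A from hA, Real.sq_sqrt]
  rw [trace_sq_re hA]
  positivity

lemma frob_sq {A : Matrix (Fin m) (Fin m) ℂ} (hA : A.IsHermitian) :
    frobNorm A ^ 2 = ∑ i, hA.eigenvalues i ^ 2 := by
  rw [frob_sq_trace hA, trace_sq_re hA]

section Frob
attribute [local instance] Matrix.frobeniusNormedAddCommGroup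

lemma frobNorm_eq_norm (A : Matrix (Fin m) (Fin m) ℂ) : frobNorm A = ‖A‖ := by
  rw [frobenius_norm_def, frobNorm, Real.sqrt_eq_rpow]
  congr 1
  have : (Matrix.trace (Aᴴ * A)).re = ∑ j, ∑ i, ‖A i j‖ ^ 2 := by
    simp only [Matrix.trace, Matrix.diag, Matrix.mul_apply, conjTranspose_apply]
    rw [Complex.re_sum]
    refine Finset.sum_congr rfl fun j _ => ?_
    rw [Complex.re_sum]
    refine Finset.sum_congr rfl fun i _ => ?_
    rw [RCLike.star_def, mul_comm, Complex.mul_conj]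
    simp [Complex.normSq_eq_norm_sq, ← Complex.ofReal_pow]
  rw [this, Finset.sum_comm]
  refine Finset.sum_congr rfl fun i _ => Finset.sum_congr rfl fun j _ => ?_
  rw [← Real.rpow_natCast ‖A i j‖ 2]
  norm_num

lemma frob_triangle (A B : Matrix (Fin m) (Fin m) ℂ) :
    frobNorm (A + B) ≤ frobNorm A + frobNorm B := by
  simp only [frobNorm_eq_norm]; exact norm_add_le _ _

end Frob

lemma frob_nonneg (A : Matrix (Fin m) (Fin m) ℂ) : 0 ≤ frobNorm A := Real.sqrt_nonneg _

lemma zetaFn_eq (x : ℝ) : zetaFn x = (min x 0) ^ 2 := by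
  unfold zetaFn
  rcases le_total x 0 with h | h
  · simp [min_eq_left h, h]
  · rcases eq_or_lt_of_le h with h' | h'
    · simp [← h']
    · simp [min_eq_right h, not_le.mpr h', h]

lemma min_lip (x y : ℝ) : (min x 0 - min y 0) ^ 2 ≤ (x - y) ^ 2 := by
  rcases le_total x 0 with hx | hx <;> rcases le_total y 0 with hy | hy <;>
    simp [min_eq_left, min_eq_right, hx, hy] <;> nlinarith

lemma min_sq_le (x : ℝ) : (min x 0) ^ 2 ≤ x ^ 2 := by
  rcases le_total x 0 with hx | hx
  · rw [min_eq_left hx]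
  · rw [min_eq_right hx]; nlinarith [sq_nonneg x]

lemma sum_d_left {d : Fin m → Fin m → ℝ} {f : Fin m → ℝ}
    (hrow : ∀ i, ∑ j, d i j = 1) :
    ∑ i, ∑ j, d i j * f i = ∑ i, f i := by
  refine Finset.sum_congr rfl fun i _ => ?_
  rw [← Finset.sum_mul, hrow i, one_mul]

lemma sum_d_right {d : Fin m → Fin m → ℝ} {f : Fin m → ℝ}
    (hcol : ∀ j, ∑ i, d i j = 1) :
    ∑ i, ∑ j, d i j * f j = ∑ j, f j := by
  rw [Finset.sum_comm]
  refine Finset.sum_congr rfl fun j _ => ?_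
  rw [← Finset.sum_mul, hcol j, one_mul]

lemma key {A B : Matrix (Fin m) (Fin m) ℂ} (hA : A.IsHermitian) (hB : B.IsHermitian) :
    |traceZeta hA - traceZeta hB| ≤
      frobNorm (A - B) * Real.sqrt (2 * (frobNorm A ^ 2 + frobNorm B ^ 2)) := by
  classical
  set α := hA.eigenvalues with hα
  set β := hB.eigenvalues with hβ
  set W := (hA.eigenvectorUnitary : Matrix (Fin m) (Fin m) ℂ)ᴴ
      * (hB.eigenvectorUnitary : Matrix (Fin m) (Fin m) ℂ) with hWdef
  set d : Fin m → Fin m → ℝ := fun i j => ‖W i j‖ ^ 2 with hd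
  have hd0 : ∀ i j, 0 ≤ d i j := fun i j => sq_nonneg _
  have hWWh : W * Wᴴ = 1 := by
    rw [hWdef]
    simp only [conjTranspose_mul, conjTranspose_conjTranspose, Matrix.mul_assoc]
    rw [← Matrix.mul_assoc (hB.eigenvectorUnitary : Matrix (Fin m) (Fin m) ℂ),
      (unit1 hB).2, Matrix.one_mul, (unit1 hA).1]
  have hWhW : Wᴴ * W = 1 := by
    rw [hWdef]
    simp only [conjTranspose_mul, conjTranspose_conjTranspose, Matrix.mul_assoc]
    rw [← Matrix.mul_assoc (hA.eigenvectorUnitary : Matrix (Fin m) (Fin m) ℂ),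
      (unit1 hA).2, Matrix.one_mul, (unit1 hB).1]
  have hrow : ∀ i, ∑ j, d i j = 1 := row_sum W hWWh
  have hcol : ∀ j, ∑ i, d i j = 1 := col_sum W hWhW
  -- Frobenius norm of A - B in terms of d, α, β
  have hAB : (A - B).IsHermitian := hA.sub hB
  have htrAB : (Matrix.trace (A * B)).re = ∑ i, ∑ j, d i j * (α i * β j) := trace_mul_re hA hB
  have ha : frobNorm A ^ 2 = ∑ i, α i ^ 2 := frob_sq hA
  have hb : frobNorm B ^ 2 = ∑ i, β i ^ 2 := frob_sq hB
  have hS : frobNorm (A - B) ^ 2 = ∑ i, ∑ j, d i j * (α i - β j) ^ 2 := by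
    have h1 : frobNorm (A - B) ^ 2
        = (Matrix.trace (A * A)).re + (Matrix.trace (B * B)).re
          - 2 * (Matrix.trace (A * B)).re := by
      rw [frob_sq_trace hAB]
      have : (A - B) * (A - B) = A * A - A * B - (B * A - B * B) := by
        rw [Matrix.sub_mul, Matrix.mul_sub, Matrix.mul_sub]
      rw [this]
      simp only [Matrix.trace_sub, Complex.sub_re]
      rw [Matrix.trace_mul_comm B A]
      ring
    rw [h1, trace_sq_re hA, trace_sq_re hB, htrAB]
    have e1 : ∑ i, ∑ j, d i j * (α i - β j) ^ 2
        = ∑ i, ∑ j, (d i j * (α i ^ 2) + d i j * (β j ^ 2) - 2 * (d i j * (α i * β j))) := by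
      refine Finset.sum_congr rfl fun i _ => Finset.sum_congr rfl fun j _ => ?_
      ring
    rw [e1]
    simp only [Finset.sum_sub_distrib, Finset.sum_add_distrib, ← Finset.mul_sum]
    rw [sum_d_left hrow, sum_d_right hcol]
  -- traceZeta difference as double sum
  have hT : traceZeta hA - traceZeta hB
      = ∑ i, ∑ j, d i j * (zetaFn (α i) - zetaFn (β j)) := by
    have e1 : ∑ i, ∑ j, d i j * (zetaFn (α i) - zetaFn (β j))
        = ∑ i, ∑ j, d i j * zetaFn (α i) - ∑ i, ∑ j, d i j * zetaFn (β j) := by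
      simp only [mul_sub, Finset.sum_sub_distrib]
    rw [e1, sum_d_left hrow, sum_d_right hcol]
    rfl
  -- Cauchy-Schwarz
  set g : ℝ → ℝ := fun x => min x 0 with hg
  have hCS := Finset.sum_mul_sq_le_sq_mul_sq (Finset.univ : Finset (Fin m × Fin m))
    (fun p => Real.sqrt (d p.1 p.2) * (g (α p.1) - g (β p.2)))
    (fun p => Real.sqrt (d p.1 p.2) * (g (α p.1) + g (β p.2)))
  simp only [Fintype.sum_prod_type] at hCS
  have hsq : ∀ i j, Real.sqrt (d i j) ^ 2 = d i j := fun i j => Real.sq_sqrt (hd0 i j)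
  have hTprod : traceZeta hA - traceZeta hB
      = ∑ i, ∑ j, (Real.sqrt (d i j) * (g (α i) - g (β j)))
          * (Real.sqrt (d i j) * (g (α i) + g (β j))) := by
    rw [hT]
    refine Finset.sum_congr rfl fun i _ => Finset.sum_congr rfl fun j _ => ?_
    have : (Real.sqrt (d i j) * (g (α i) - g (β j)))
          * (Real.sqrt (d i j) * (g (α i) + g (β j)))
        = Real.sqrt (d i j) ^ 2 * ((g (α i)) ^ 2 - (g (β j)) ^ 2) := by ring
    rw [this, hsq, zetaFn_eq, zetaFn_eq]
  have hf2 : ∑ i, ∑ j, (Real.sqrt (d i j) * (g (α i) - g (β j))) ^ 2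
      ≤ frobNorm (A - B) ^ 2 := by
    rw [hS]
    refine Finset.sum_le_sum fun i _ => Finset.sum_le_sum fun j _ => ?_
    rw [mul_pow, hsq]
    exact mul_le_mul_of_nonneg_left (min_lip _ _) (hd0 _ _)
  have hg2 : ∑ i, ∑ j, (Real.sqrt (d i j) * (g (α i) + g (β j))) ^ 2
      ≤ 2 * (frobNorm A ^ 2 + frobNorm B ^ 2) := by
    have step : ∑ i, ∑ j, (Real.sqrt (d i j) * (g (α i) + g (β j))) ^ 2
        ≤ ∑ i, ∑ j, (2 * (d i j * (α i ^ 2)) + 2 * (d i j * (β j ^ 2))) := by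
      refine Finset.sum_le_sum fun i _ => Finset.sum_le_sum fun j _ => ?_
      rw [mul_pow, hsq]
      have h1 : (g (α i) + g (β j)) ^ 2 ≤ 2 * α i ^ 2 + 2 * β j ^ 2 := by
        have := min_sq_le (α i)
        have := min_sq_le (β j)
        nlinarith [sq_nonneg (g (α i) - g (β j))]
      nlinarith [hd0 i j]
    refine step.trans ?_
    have e : ∑ i, ∑ j, (2 * (d i j * (α i ^ 2)) + 2 * (d i j * (β j ^ 2)))
        = 2 * (∑ i, ∑ j, d i j * (α i ^ 2)) + 2 * (∑ i, ∑ j, d i j * (β j ^ 2)) := by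
      simp only [Finset.sum_add_distrib, ← Finset.mul_sum]
    rw [e, sum_d_left hrow, sum_d_right hcol, ha, hb]
    linarith
  have hT2 : (traceZeta hA - traceZeta hB) ^ 2
      ≤ frobNorm (A - B) ^ 2 * (2 * (frobNorm A ^ 2 + frobNorm B ^ 2)) := by
    rw [hTprod]
    refine hCS.trans ?_
    refine mul_le_mul hf2 hg2 ?_ (sq_nonneg _)
    exact Finset.sum_nonneg fun i _ => Finset.sum_nonneg fun j _ => sq_nonneg _
  calc |traceZeta hA - traceZeta hB|
      = Real.sqrt ((traceZeta hA - traceZeta hB) ^ 2) := (Real.sqrt_sq_eq_abs _).symm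
    _ ≤ Real.sqrt (frobNorm (A - B) ^ 2 * (2 * (frobNorm A ^ 2 + frobNorm B ^ 2))) :=
        Real.sqrt_le_sqrt hT2
    _ = frobNorm (A - B) * Real.sqrt (2 * (frobNorm A ^ 2 + frobNorm B ^ 2)) := by
        rw [Real.sqrt_mul (sq_nonneg _), Real.sqrt_sq (frob_nonneg _)]

end ZetaProofAux

open ZetaProofAux in
/-- For Hermitian matrices `P`, `Q` of the same dimension,
`|Tr ζ(P+Q) − Tr ζ(P)| ≤ 2(‖P‖₂‖Q‖₂ + ‖Q‖₂²)`. -/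
theorem abs_traceZeta_add_sub_traceZeta_le {m : ℕ} {P Q : Matrix (Fin m) (Fin m) ℂ}
    (hP : P.IsHermitian) (hQ : Q.IsHermitian) :
    |traceZeta (hP.add hQ) - traceZeta hP| ≤
      2 * (frobNorm P * frobNorm Q + frobNorm Q ^ 2) := by
  have h := key (hP.add hQ) hP
  rw [add_sub_cancel_left] at h
  refine h.trans ?_
  have hp := frob_nonneg P
  have hq := frob_nonneg Q
  have htri : frobNorm (P + Q) ≤ frobNorm P + frobNorm Q := frob_triangle P Q
  have h0 : 0 ≤ frobNorm (P + Q) := frob_nonneg _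
  have hs : Real.sqrt (2 * (frobNorm (P + Q) ^ 2 + frobNorm P ^ 2))
      ≤ 2 * (frobNorm P + frobNorm Q) := by
    rw [show 2 * (frobNorm P + frobNorm Q)
        = Real.sqrt ((2 * (frobNorm P + frobNorm Q)) ^ 2) from
      (Real.sqrt_sq (by positivity)).symm]
    apply Real.sqrt_le_sqrt
    nlinarith
  calc frobNorm Q * Real.sqrt (2 * (frobNorm (P + Q) ^ 2 + frobNorm P ^ 2))
      ≤ frobNorm Q * (2 * (frobNorm P + frobNorm Q)) := by
        exact mul_le_mul_of_nonneg_left hs hq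
    _ = 2 * (frobNorm P * frobNorm Q + frobNorm Q ^ 2) := by ring
end

section
/- If A and B are Hermitian matrices with A ≥ B ≥ 0 (in the Loewner order), then B A⁺ B ≤ B, where A⁺ denotes the Moore–Penrose pseudoinverse of A. -/
open Matrix ComplexOrder

/-- The Moore–Penrose pseudoinverse of a Hermitian matrix, defined via its spectral
decomposition: invert the nonzero eigenvalues and leave the kernel alone. -/
noncomputable def hermitianPinv {n : ℕ} {A : Matrix (Fin n) (Fin n) ℂ}
    (hA : A.IsHermitian) : Matrix (Fin n) (Fin n) ℂ :=
  (hA.eigenvectorUnitary : Matrix (Fin n) (Fin n) ℂ) *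
    Matrix.diagonal (fun i => ((if hA.eigenvalues i = 0 then 0 else (hA.eigenvalues i)⁻¹ : ℝ) : ℂ)) *
    star (hA.eigenvectorUnitary : Matrix (Fin n) (Fin n) ℂ)

lemma hermitianPinv_posSemidef {n : ℕ} {A : Matrix (Fin n) (Fin n) ℂ}
    (hA : A.IsHermitian) (hApsd : A.PosSemidef) : (hermitianPinv hA).PosSemidef := by
  unfold hermitianPinv
  have hnn : ∀ i, (0:ℂ) ≤ ((if hA.eigenvalues i = 0 then 0 else (hA.eigenvalues i)⁻¹ : ℝ) : ℂ) := by
    intro i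
    rw [Complex.zero_le_real]
    have := hApsd.eigenvalues_nonneg i
    split_ifs with h
    · exact le_refl 0
    · exact inv_nonneg.2 (hApsd.eigenvalues_nonneg i)
  have := (Matrix.posSemidef_diagonal_iff.mpr hnn).mul_mul_conjTranspose_same
    (hA.eigenvectorUnitary : Matrix (Fin n) (Fin n) ℂ)
  simpa [Matrix.mul_assoc, Matrix.star_eq_conjTranspose] using this

lemma hermitianPinv_mul_self {n : ℕ} {A : Matrix (Fin n) (Fin n) ℂ}
    (hA : A.IsHermitian) :
    hermitianPinv hA * A * hermitianPinv hA = hermitianPinv hA := by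
  set U := (hA.eigenvectorUnitary : Matrix (Fin n) (Fin n) ℂ) with hUdef
  set E : Matrix (Fin n) (Fin n) ℂ := Matrix.diagonal (fun i => ((if hA.eigenvalues i = 0 then 0 else (hA.eigenvalues i)⁻¹ : ℝ) : ℂ)) with hEdef
  set D : Matrix (Fin n) (Fin n) ℂ := Matrix.diagonal (RCLike.ofReal ∘ hA.eigenvalues) with hDdef
  have hU : star U * U = 1 := (Matrix.mem_unitaryGroup_iff').mp hA.eigenvectorUnitary.2
  have hEDE : E * D * E = E := by
    rw [hEdef, hDdef, Matrix.diagonal_mul_diagonal, Matrix.diagonal_mul_diagonal]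
    refine congrArg Matrix.diagonal (funext fun i => ?_)
    by_cases h : hA.eigenvalues i = 0
    · simp [h, Function.comp]
    · simp only [h, if_false, Function.comp_apply, RCLike.ofReal_inv]
      field_simp
      simp [h]
  have key : (U * E * star U) * (U * D * star U) * (U * E * star U) = U * E * star U := by
    calc (U * E * star U) * (U * D * star U) * (U * E * star U)
        = U * ((E * ((star U * U) * D)) * ((star U * U) * (E * star U))) := by
          simp only [Matrix.mul_assoc]
      _ = U * (E * D * E) * star U := by rw [hU]; simp only [Matrix.one_mul, Matrix.mul_assoc]
      _ = U * E * star U := by rw [hEDE]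
  calc hermitianPinv hA * A * hermitianPinv hA
      = (U * E * star U) * (U * D * star U) * (U * E * star U) := by
        have hs : U * D * star U = A :=
          (hA.spectral_theorem.trans (Unitary.conjStarAlgAut_apply _ _)).symm
        rw [hs]; rfl
    _ = U * E * star U := key
    _ = hermitianPinv hA := rfl

/-- If `A ≥ B ≥ 0` in the Loewner order, then `B A⁺ B ≤ B`, where `A⁺` is the
Moore–Penrose inverse of `A`. -/
theorem pinv_sandwich_le {n : ℕ} {A B : Matrix (Fin n) (Fin n) ℂ}
    (hA : A.IsHermitian) (hB : B.PosSemidef) (hAB : (A - B).PosSemidef) :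
    (B - B * hermitianPinv hA * B).PosSemidef := by
  have hApsd : A.PosSemidef := by
    have := hAB.add hB
    rwa [sub_add_cancel] at this
  obtain ⟨P, hP, hPAP, hPdef⟩ : ∃ P : Matrix (Fin n) (Fin n) ℂ,
      P.PosSemidef ∧ P * A * P = P ∧ hermitianPinv hA = P :=
    ⟨hermitianPinv hA, hermitianPinv_posSemidef hA hApsd, hermitianPinv_mul_self hA, rfl⟩
  rw [hPdef]
  clear hPdef
  refine Matrix.PosSemidef.of_dotProduct_mulVec_nonneg ?_ ?_
  · simp [Matrix.IsHermitian, Matrix.conjTranspose_sub, Matrix.conjTranspose_mul,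
      hB.1.eq, hP.1.eq, Matrix.mul_assoc]
  · intro x
    have quad : ∀ (C M D : Matrix (Fin n) (Fin n) ℂ),
        star (C *ᵥ x) ⬝ᵥ M *ᵥ (D *ᵥ x) = star x ⬝ᵥ (Cᴴ * M * D) *ᵥ x := by
      intro C M D
      simp [Matrix.star_mulVec, Matrix.dotProduct_mulVec, Matrix.vecMul_vecMul,
        Matrix.mul_assoc]
    have quad1 : ∀ (C M : Matrix (Fin n) (Fin n) ℂ),
        star (C *ᵥ x) ⬝ᵥ M *ᵥ x = star x ⬝ᵥ (Cᴴ * M) *ᵥ x := by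
      intro C M
      simp [Matrix.star_mulVec, Matrix.dotProduct_mulVec, Matrix.vecMul_vecMul,
        Matrix.mul_assoc]
    have hPBH : (P * B)ᴴ = B * P := by
      rw [Matrix.conjTranspose_mul, hB.1.eq, hP.1.eq]
    set y : Fin n → ℂ := (P * B) *ᵥ x with hy
    have e1 : star x ⬝ᵥ B *ᵥ y = star x ⬝ᵥ (B * P * B) *ᵥ x := by
      rw [hy]
      simp only [Matrix.mulVec_mulVec, Matrix.mul_assoc]
    have e2 : star y ⬝ᵥ B *ᵥ x = star x ⬝ᵥ (B * P * B) *ᵥ x := by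
      rw [hy, quad1, hPBH]
    have e3 : star y ⬝ᵥ B *ᵥ y = star x ⬝ᵥ (B * P * B * P * B) *ᵥ x := by
      rw [hy, quad, hPBH]
      simp only [Matrix.mul_assoc]
    have h1 : (0:ℂ) ≤ star x ⬝ᵥ B *ᵥ x - star x ⬝ᵥ (B * P * B) *ᵥ x
        - star x ⬝ᵥ (B * P * B) *ᵥ x + star x ⬝ᵥ (B * P * B * P * B) *ᵥ x := by
      have h := hB.dotProduct_mulVec_nonneg (x - y)
      rw [star_sub, Matrix.mulVec_sub, sub_dotProduct, dotProduct_sub,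
        dotProduct_sub, e1, e2, e3] at h
      convert h using 1
      ring
    have h2 : (0:ℂ) ≤ star x ⬝ᵥ (B * P * B) *ᵥ x
        - star x ⬝ᵥ (B * P * B * P * B) *ᵥ x := by
      have h := hAB.dotProduct_mulVec_nonneg y
      rw [hy, quad, hPBH] at h
      have e4 : B * P * (A - B) * (P * B) = B * P * B - B * P * B * P * B := by
        have hm : B * P * A * (P * B) = B * P * B := by
          calc B * P * A * (P * B) = B * ((P * A * P) * B) := by
                simp only [Matrix.mul_assoc]
            _ = B * (P * B) := by rw [hPAP]
            _ = B * P * B := by rw [Matrix.mul_assoc]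
        rw [Matrix.mul_sub, Matrix.sub_mul, hm]
        congr 1
        simp only [Matrix.mul_assoc]
      rw [e4, Matrix.sub_mulVec, dotProduct_sub] at h
      exact h
    have key : star x ⬝ᵥ (B - B * P * B) *ᵥ x
        = star x ⬝ᵥ B *ᵥ x - star x ⬝ᵥ (B * P * B) *ᵥ x := by
      rw [Matrix.sub_mulVec, dotProduct_sub]
    rw [key]
    have := add_nonneg h1 h2
    convert this using 1
    ring
end

section
/- Let J be a positive semidefinite operator on the tensor product of Hilbert spaces S ⊗ A, where A has dimension a. Then a · (Tr_A J) ⊗ I_A ≥ J in the Loewner order, where Tr_A is the partial trace over A. -/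
open Matrix ComplexOrder

/-- Partial trace over the second tensor factor `A` of an operator on `S ⊗ A`. -/
noncomputable def ptraceA {s a : ℕ} (J : Matrix (Fin s × Fin a) (Fin s × Fin a) ℂ) :
    Matrix (Fin s) (Fin s) ℂ :=
  fun i j => ∑ k : Fin a, J (i, k) (j, k)

/-- Tensor product `M ⊗ I_A` of an operator on `S` with the identity on `A`. -/
noncomputable def tensorIdA {s a : ℕ} (M : Matrix (Fin s) (Fin s) ℂ) :
    Matrix (Fin s × Fin a) (Fin s × Fin a) ℂ :=
  fun p q => M p.1 q.1 * (if p.2 = q.2 then 1 else 0)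

private lemma sum4_comm {ι κ : Type*} [Fintype ι] [Fintype κ] (f : ι → κ → ι → κ → ℂ) :
    ∑ i, ∑ m, ∑ j, ∑ k, f i m j k = ∑ k, ∑ m, ∑ i, ∑ j, f i m j k := calc
  ∑ i, ∑ m, ∑ j, ∑ k, f i m j k = ∑ i, ∑ m, ∑ k, ∑ j, f i m j k :=
    Finset.sum_congr rfl fun _ _ => Finset.sum_congr rfl fun _ _ => Finset.sum_comm
  _ = ∑ i, ∑ k, ∑ m, ∑ j, f i m j k := Finset.sum_congr rfl fun _ _ => Finset.sum_comm
  _ = ∑ k, ∑ i, ∑ m, ∑ j, f i m j k := Finset.sum_comm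
  _ = ∑ k, ∑ m, ∑ i, ∑ j, f i m j k := Finset.sum_congr rfl fun _ _ => Finset.sum_comm

private lemma sum4_comm' {ι κ : Type*} [Fintype ι] [Fintype κ] (f : ι → κ → ι → κ → ℂ) :
    ∑ i, ∑ k, ∑ j, ∑ l, f i k j l = ∑ k, ∑ l, ∑ i, ∑ j, f i k j l := calc
  ∑ i, ∑ k, ∑ j, ∑ l, f i k j l = ∑ k, ∑ i, ∑ j, ∑ l, f i k j l := Finset.sum_comm
  _ = ∑ k, ∑ i, ∑ l, ∑ j, f i k j l :=
    Finset.sum_congr rfl fun _ _ => Finset.sum_congr rfl fun _ _ => Finset.sum_comm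
  _ = ∑ k, ∑ l, ∑ i, ∑ j, f i k j l := Finset.sum_congr rfl fun _ _ => Finset.sum_comm

/-- If `J ≥ 0` on `S ⊗ A` with `dim A = a`, then `a · (Tr_A J) ⊗ I_A ≥ J`. -/
theorem ptrace_tensor_id_ge {s a : ℕ} {J : Matrix (Fin s × Fin a) (Fin s × Fin a) ℂ}
    (hJ : J.PosSemidef) :
    ((a : ℂ) • tensorIdA (ptraceA J) - J).PosSemidef := by
  obtain ⟨hH, hq⟩ := posSemidef_iff_dotProduct_mulVec.mp hJ
  refine posSemidef_iff_dotProduct_mulVec.mpr ⟨?_, ?_⟩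
  · -- Hermitian part
    ext ⟨i, m⟩ ⟨j, n⟩
    simp only [conjTranspose_apply, Matrix.sub_apply, Matrix.smul_apply, tensorIdA, ptraceA,
      star_sub, star_mul', star_sum, smul_eq_mul, star_natCast]
    rw [hH.apply]
    congr 3
    · exact Finset.sum_congr rfl fun k _ => hH.apply _ _
    · simp [apply_ite (star : ℂ → ℂ), eq_comm]
  · -- quadratic form part
    intro x
    set B : ((Fin s × Fin a) → ℂ) → ((Fin s × Fin a) → ℂ) → ℂ :=
      fun u v => star u ⬝ᵥ (J *ᵥ v) with hBdef
    set y : Fin a → Fin a → (Fin s × Fin a → ℂ) :=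
      fun k l p => if p.2 = k then x (p.1, l) else 0 with hydef
    have hBkl : ∀ k l m n, B (y k l) (y m n)
        = ∑ i, ∑ j, star (x (i, l)) * (J (i, k) (j, m) * x (j, n)) := by
      intro k l m n
      simp only [hBdef, hydef, dotProduct, mulVec, Fintype.sum_prod_type, Pi.star_apply,
        apply_ite (star : ℂ → ℂ), star_zero, ite_mul, mul_ite, zero_mul, mul_zero,
        Finset.sum_ite_eq, Finset.sum_ite_eq', Finset.mem_univ, if_true, Finset.mul_sum]
      refine Finset.sum_congr rfl fun i _ => ?_
      rw [Finset.sum_comm]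
      simp
    have E1 : star x ⬝ᵥ (tensorIdA (ptraceA J) *ᵥ x) = ∑ k, ∑ l, B (y k l) (y k l) := by
      simp only [hBkl]
      simp only [dotProduct, mulVec, tensorIdA, ptraceA, Fintype.sum_prod_type,
        Finset.sum_mul, Finset.mul_sum, mul_ite, ite_mul, mul_zero, zero_mul, mul_one,
        Finset.sum_ite_eq, Finset.sum_ite_eq', Finset.mem_univ, if_true]
      exact sum4_comm _
    have E2 : B x x = ∑ k, ∑ l, B (y k k) (y l l) := by
      simp only [hBkl]
      simp only [hBdef, dotProduct, mulVec, Fintype.sum_prod_type, Finset.mul_sum]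
      exact sum4_comm' _
    have Epar : ∀ k l, B (y k k - y l l) (y k k - y l l)
        = B (y k k) (y k k) + B (y l l) (y l l) - B (y k k) (y l l) - B (y l l) (y k k) := by
      intro k l
      simp only [hBdef, star_sub, Matrix.mulVec_sub, sub_dotProduct,
        dotProduct_sub]
      ring
    have hQ : ∀ u, 0 ≤ B u u := fun u => hq u
    have hGle : (∑ k : Fin a, B (y k k) (y k k)) ≤ ∑ k, ∑ l, B (y k l) (y k l) :=
      Finset.sum_le_sum fun k _ =>
        Finset.single_le_sum (f := fun l => B (y k l) (y k l)) (fun l _ => hQ _)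
          (Finset.mem_univ k)
    have hDeq : ∑ k : Fin a, ∑ l : Fin a, B (y k k - y l l) (y k k - y l l)
        = (a : ℂ) * (∑ k, B (y k k) (y k k)) + (a : ℂ) * (∑ k, B (y k k) (y k k))
          - (∑ k, ∑ l, B (y k k) (y l l)) - (∑ k, ∑ l, B (y k k) (y l l)) := by
      simp only [Epar, Finset.sum_sub_distrib, Finset.sum_add_distrib, Finset.sum_const,
        Finset.card_univ, Fintype.card_fin, nsmul_eq_mul, ← Finset.sum_mul, ← Finset.mul_sum]
      congr 1
      exact Finset.sum_comm
    have hDsum : (0:ℂ) ≤ ∑ k : Fin a, ∑ l : Fin a, B (y k k - y l l) (y k k - y l l) :=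
      Finset.sum_nonneg fun k _ => Finset.sum_nonneg fun l _ => hQ _
    have haC : (0:ℂ) ≤ (a:ℂ) := by
      rw [Complex.le_def]; simp
    have hc : star x ⬝ᵥ (((a : ℂ) • tensorIdA (ptraceA J) - J) *ᵥ x)
        = (a:ℂ) * (∑ k, ∑ l, B (y k l) (y k l)) - ∑ k, ∑ l, B (y k k) (y l l) := by
      rw [Matrix.sub_mulVec, dotProduct_sub, Matrix.smul_mulVec,
        dotProduct_smul, smul_eq_mul, E1, show star x ⬝ᵥ J *ᵥ x = B x x from rfl, E2]
    set SQ := ∑ k : Fin a, ∑ l : Fin a, B (y k l) (y k l)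
    set G := ∑ k : Fin a, B (y k k) (y k k)
    set P := ∑ k : Fin a, ∑ l : Fin a, B (y k k) (y l l)
    have key : (0:ℂ) ≤ ((a:ℂ) * SQ - P) + ((a:ℂ) * SQ - P) := by
      have h1 : (a:ℂ) * G ≤ (a:ℂ) * SQ := mul_le_mul_of_nonneg_left hGle haC
      have h2 : (0:ℂ) ≤ ((a:ℂ) * G + (a:ℂ) * G - P - P) := hDeq ▸ hDsum
      calc (0:ℂ) ≤ ((a:ℂ) * G + (a:ℂ) * G - P - P) := h2
      _ ≤ ((a:ℂ) * SQ - P) + ((a:ℂ) * SQ - P) := by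
          have := add_le_add h1 h1
          rw [Complex.le_def] at this ⊢
          constructor
          · simp only [Complex.sub_re, Complex.add_re] at this ⊢; linarith
          · simp only [Complex.sub_im, Complex.add_im] at this ⊢; linarith
    rw [hc]
    rw [Complex.le_def] at key ⊢
    constructor
    · have := key.1; simp only [Complex.add_re, Complex.zero_re] at this ⊢; linarith
    · have := key.2; simp only [Complex.add_im, Complex.zero_im] at this ⊢; linarith
end

section
/- For 0 ≤ ε < 1 and integer m > 1, the depolarized maximally entangled state (1−ε)|Ψ⟩⟨Ψ| + ε·(I_m/m) ⊗ (I_m/m), where |Ψ⟩ = (1/√m)∑ᵢ|ii⟩, has maximal correlation exactly 1 − ε. -/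
open Matrix

/-- Tensor (Kronecker) product of operators, as an operator on the product system. -/
noncomputable def tensorOp {s t : ℕ} (P : Matrix (Fin s) (Fin s) ℂ)
    (Q : Matrix (Fin t) (Fin t) ℂ) : Matrix (Fin s × Fin t) (Fin s × Fin t) ℂ :=
  fun x y => P x.1 y.1 * Q x.2 y.2

/-- The projector `|Ψ⟩⟨Ψ|` onto the `m`-dimensional maximally entangled state
`|Ψ⟩ = (1/√m) ∑ᵢ |i⟩|i⟩`. -/
noncomputable def mesProj (m : ℕ) : Matrix (Fin m × Fin m) (Fin m × Fin m) ℂ :=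
  fun p q => if p.1 = p.2 ∧ q.1 = q.2 then (m : ℂ)⁻¹ else 0

/-- The depolarized maximally entangled state
`(1−ε)|Ψ⟩⟨Ψ| + ε·(I/m) ⊗ (I/m)`. -/
noncomputable def depolarizedMES (m : ℕ) (ε : ℝ) :
    Matrix (Fin m × Fin m) (Fin m × Fin m) ℂ :=
  ((1 - ε : ℝ) : ℂ) • mesProj m + ((ε : ℂ) / (m : ℂ) ^ 2) • (1 : Matrix (Fin m × Fin m) (Fin m × Fin m) ℂ)

lemma trace_tensor_mes (m : ℕ) (P Q : Matrix (Fin m) (Fin m) ℂ) :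
    Matrix.trace (tensorOp P Q * mesProj m) = (m:ℂ)⁻¹ * ∑ i, ∑ j, P i j * Q i j := by
  simp only [Matrix.trace, Matrix.diag, Matrix.mul_apply, tensorOp, mesProj,
    Fintype.sum_prod_type, mul_ite, mul_zero, ite_and, Finset.sum_ite_eq,
    Finset.sum_ite_irrel, Finset.sum_const_zero, Finset.mem_univ, if_true]
  rw [Finset.mul_sum]
  refine Finset.sum_congr rfl fun i _ => ?_
  rw [Finset.mul_sum]
  refine Finset.sum_congr rfl fun j _ => ?_
  ring

lemma trace_tensor_one (m : ℕ) (P Q : Matrix (Fin m) (Fin m) ℂ) :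
    Matrix.trace (tensorOp P Q * 1) = Matrix.trace P * Matrix.trace Q := by
  rw [mul_one]
  simp only [Matrix.trace, Matrix.diag, tensorOp, Fintype.sum_prod_type]
  rw [Finset.sum_mul_sum]

lemma trace_formula (m : ℕ) (ε : ℝ) (P Q : Matrix (Fin m) (Fin m) ℂ) :
    Matrix.trace (tensorOp P Q * depolarizedMES m ε) =
      ((1 - ε : ℝ) : ℂ) * ((m:ℂ)⁻¹ * ∑ i, ∑ j, P i j * Q i j)
        + ((ε : ℂ) / (m : ℂ) ^ 2) * (Matrix.trace P * Matrix.trace Q) := by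
  rw [depolarizedMES, Matrix.mul_add, Matrix.mul_smul, Matrix.mul_smul,
    Matrix.trace_add, Matrix.trace_smul, Matrix.trace_smul,
    trace_tensor_mes, trace_tensor_one, smul_eq_mul, smul_eq_mul]

lemma herm_entry {m : ℕ} {P : Matrix (Fin m) (Fin m) ℂ} (hP : P.IsHermitian) (i j : Fin m) :
    P j i = starRingEnd ℂ (P i j) := by
  conv_lhs => rw [← hP]
  simp [Matrix.conjTranspose_apply]

lemma trace_sq_re {m : ℕ} {P : Matrix (Fin m) (Fin m) ℂ} (hP : P.IsHermitian) :
    (Matrix.trace (P * P)).re = ∑ i, ∑ j, Complex.normSq (P i j) := by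
  have h : Matrix.trace (P * P) = ∑ i, ∑ j, (Complex.normSq (P i j) : ℂ) := by
    simp only [Matrix.trace, Matrix.diag, Matrix.mul_apply]
    refine Finset.sum_congr rfl fun i _ => Finset.sum_congr rfl fun j _ => ?_
    rw [herm_entry hP i j, Complex.mul_conj]
  rw [h]; simp

lemma upper_bd (m : ℕ) (hm : 1 < m) (ε : ℝ) (hε0 : 0 ≤ ε) (hε1 : ε < 1)
    (P Q : Matrix (Fin m) (Fin m) ℂ) (hP : P.IsHermitian) (hQ : Q.IsHermitian)
    (hTP : Matrix.trace P = 0)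
    (hP2 : (1 / (m : ℝ)) * (Matrix.trace (P * P)).re = 1)
    (hQ2 : (1 / (m : ℝ)) * (Matrix.trace (Q * Q)).re = 1) :
    ‖Matrix.trace (tensorOp P Q * depolarizedMES m ε)‖ ≤ 1 - ε := by
  have hm0 : (0:ℝ) < m := by exact_mod_cast Nat.zero_lt_of_lt hm
  have hmne : (m:ℝ) ≠ 0 := ne_of_gt hm0
  have hPn : ∑ i, ∑ j, Complex.normSq (P i j) = m := by
    have := trace_sq_re hP
    rw [this] at hP2; field_simp at hP2; linarith
  have hQn : ∑ i, ∑ j, Complex.normSq (Q i j) = m := by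
    have := trace_sq_re hQ
    rw [this] at hQ2; field_simp at hQ2; linarith
  set S : ℂ := ∑ i, ∑ j, P i j * Q i j with hS
  have h1 : ‖S‖ ≤ ∑ i, ∑ j, ‖P i j‖ * ‖Q i j‖ := by
    calc ‖S‖ ≤ ∑ i, ‖∑ j, P i j * Q i j‖ := norm_sum_le _ _
    _ ≤ ∑ i, ∑ j, ‖P i j * Q i j‖ :=
        Finset.sum_le_sum fun i _ => norm_sum_le _ _
    _ = ∑ i, ∑ j, ‖P i j‖ * ‖Q i j‖ := by simp [norm_mul]
  have hCS : (∑ i, ∑ j, ‖P i j‖ * ‖Q i j‖) ^ 2 ≤ (m:ℝ) * m := by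
    have key := Finset.sum_mul_sq_le_sq_mul_sq Finset.univ
      (fun p : Fin m × Fin m => ‖P p.1 p.2‖)
      (fun p : Fin m × Fin m => ‖Q p.1 p.2‖)
    simp only [Fintype.sum_prod_type] at key
    simp only [Complex.sq_norm] at key
    rw [hPn, hQn] at key
    convert key using 2
  have habs : ‖S‖ ≤ m := by
    have h0 : (0:ℝ) ≤ ∑ i, ∑ j, ‖P i j‖ * ‖Q i j‖ :=
      Finset.sum_nonneg fun i _ => Finset.sum_nonneg fun j _ =>
        mul_nonneg (norm_nonneg _) (norm_nonneg _)
    nlinarith [norm_nonneg S]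
  rw [trace_formula, hTP, zero_mul, mul_zero, add_zero, norm_mul, norm_mul,
    Complex.norm_real, Real.norm_eq_abs, abs_of_nonneg (by linarith : (0:ℝ) ≤ 1 - ε)]
  have : ‖(m:ℂ)⁻¹‖ * ‖S‖ ≤ 1 := by
    rw [norm_inv]
    have : ‖(m:ℂ)‖ = m := by simp
    rw [this]
    rw [inv_mul_le_iff₀ hm0, mul_one]
    exact habs
  nlinarith [norm_nonneg S, norm_nonneg ((m:ℂ)⁻¹)]


lemma witness_props (m : ℕ) (hm : 1 < m) :
    ∃ P : Matrix (Fin m) (Fin m) ℂ, P.IsHermitian ∧ Matrix.trace P = 0 ∧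
      (∑ i, P i i * P i i) = (m : ℂ) ∧ ∀ i j, i ≠ j → P i j = 0 := by
  set a : ℝ := Real.sqrt (m / 2) with ha
  have ha2 : a ^ 2 = (m : ℝ) / 2 := Real.sq_sqrt (by positivity)
  set i0 : Fin m := ⟨0, by omega⟩
  set i1 : Fin m := ⟨1, hm⟩
  have hne : i0 ≠ i1 := by simp [i0, i1, Fin.ext_iff]
  set d : Fin m → ℂ := fun i => (if i = i0 then (a:ℂ) else 0) - (if i = i1 then (a:ℂ) else 0)
    with hd
  refine ⟨Matrix.diagonal d, ?_, ?_, ?_, ?_⟩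
  · have hsd : star d = d := by
      funext i
      simp only [Pi.star_apply, hd]
      by_cases h0 : i = i0 <;> by_cases h1 : i = i1 <;>
        simp [h0, h1, hne, hne.symm, apply_ite (starRingEnd ℂ), Complex.conj_ofReal]
    rw [Matrix.IsHermitian, Matrix.diagonal_conjTranspose, hsd]
  · rw [Matrix.trace_diagonal]
    simp [hd, Finset.sum_sub_distrib, Finset.sum_ite_eq', Finset.mem_univ]
  · have hdd : ∀ i, d i * d i =
        (if i = i0 then ((a:ℂ))^2 else 0) + (if i = i1 then ((a:ℂ))^2 else 0) := by
      intro i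
      by_cases h0 : i = i0 <;> by_cases h1 : i = i1
      · exact absurd (h0.symm.trans h1) hne
      all_goals simp [hd, h0, h1, hne, hne.symm]; try ring
    simp only [Matrix.diagonal_apply_eq]
    rw [Finset.sum_congr rfl (fun i _ => hdd i), Finset.sum_add_distrib,
      Finset.sum_ite_eq' Finset.univ i0, Finset.sum_ite_eq' Finset.univ i1]
    simp only [Finset.mem_univ, if_true]
    have : ((a:ℂ))^2 = ((m:ℝ)/2 : ℝ) := by push_cast [← ha2]; ring
    rw [this]
    push_cast
    ring
  · intro i j hij
    exact Matrix.diagonal_apply_ne d hij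

/-- For `0 ≤ ε < 1` and `m > 1`, the maximal correlation of the depolarized maximally
entangled state is exactly `1 − ε`: the supremum of `|Tr((P ⊗ Q)ψ)|` over Hermitian
traceless `P`, `Q` of normalized 2-norm `1` is `1 − ε`. -/
theorem maximal_correlation_depolarized_mes (m : ℕ) (hm : 1 < m) (ε : ℝ)
    (hε0 : 0 ≤ ε) (hε1 : ε < 1) :
    IsLUB {x : ℝ | ∃ (P Q : Matrix (Fin m) (Fin m) ℂ),
        P.IsHermitian ∧ Q.IsHermitian ∧
        Matrix.trace P = 0 ∧ Matrix.trace Q = 0 ∧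
        (1 / (m : ℝ)) * (Matrix.trace (P * P)).re = 1 ∧
        (1 / (m : ℝ)) * (Matrix.trace (Q * Q)).re = 1 ∧
        x = ‖Matrix.trace (tensorOp P Q * depolarizedMES m ε)‖}
      (1 - ε) := by
  have hm0 : (0:ℝ) < m := by exact_mod_cast Nat.zero_lt_of_lt hm
  have hmne : (m:ℂ) ≠ 0 := Nat.cast_ne_zero.mpr (by omega)
  obtain ⟨P, hP, hTP, hsum, hoff⟩ := witness_props m hm
  have htrPP : Matrix.trace (P * P) = (m : ℂ) := by
    simp only [Matrix.trace, Matrix.diag, Matrix.mul_apply]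
    calc ∑ i, ∑ j, P i j * P j i = ∑ i, P i i * P i i :=
          Finset.sum_congr rfl fun i _ => Finset.sum_eq_single i
            (fun j _ hj => by rw [hoff j i hj]; ring) (by simp)
    _ = m := hsum
  have hnorm : (1 / (m:ℝ)) * (Matrix.trace (P * P)).re = 1 := by
    rw [htrPP]
    simp
    field_simp
  have hSS : (∑ i, ∑ j, P i j * P i j) = (m : ℂ) := by
    calc ∑ i, ∑ j, P i j * P i j = ∑ i, P i i * P i i :=
          Finset.sum_congr rfl fun i _ => Finset.sum_eq_single i
            (fun j _ hj => by rw [hoff i j (Ne.symm hj)]; ring) (by simp)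
    _ = m := hsum
  constructor
  · rintro x ⟨P, Q, hP, hQ, hTP, hTQ, hP2, hQ2, rfl⟩
    exact upper_bd m hm ε hε0 hε1 P Q hP hQ hTP hP2 hQ2
  · intro b hb
    refine hb ⟨P, P, hP, hP, hTP, hTP, hnorm, hnorm, ?_⟩
    rw [trace_formula, hTP, mul_zero, mul_zero, add_zero, hSS,
      inv_mul_cancel₀ hmne, mul_one, Complex.norm_real, Real.norm_eq_abs, abs_of_nonneg (by linarith)]
end
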